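/- arXiv:1912.09984 — 3 statements merged into one kernel-verified Lean document; each statement's English description precedes it below -/
import Mathlib

section
/- Let M = (K^n, ρ) be a sum-matroid of rank k on P(K^n) with n = n_1+⋯+n_ℓ, with dual M*, generalized weights d_r = d_r(M) for 1 ≤ r ≤ n−k and d_j^⊥ = d_j(M*) for 1 ≤ j ≤ k. Fix r with 1 ≤ r ≤ n−k and set t = k + r − d_r. If t ≥ 1, then d_t^⊥ ≤ n − d_r. -/
open Module

/-! Setup for sum-rank metric codes and sum-matroids.

We fix `ℓ` finite fields `K i` with a common extension `F` (given by algebra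
structures), and block lengths `nv i`.  The ambient space `F^n` (with
`n = ∑ i, nv i`) is modelled as the dependent product of the blocks `F^{nv i}`,
and an element of the product lattice `P(K^n)` is a tuple of `K i`-subspaces of
`K i ^ (nv i)`. -/

/-- The ambient space `F^n`, split into `ℓ` blocks of sizes `nv i`. -/
abbrev SRAmb (ℓ : ℕ) (nv : Fin ℓ → ℕ) (F : Type) : Type :=
  (i : Fin ℓ) → Fin (nv i) → F

/-- The product lattice `P(K^n)`: tuples `L` where `L i` is a `K i`-subspace of
`K i ^ (nv i)`. -/
abbrev SRLat (ℓ : ℕ) (nv : Fin ℓ → ℕ) (K : Fin ℓ → Type) [∀ i, Field (K i)] : Type :=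
  (i : Fin ℓ) → Submodule (K i) (Fin (nv i) → K i)

variable {ℓ : ℕ} {nv : Fin ℓ → ℕ} {F : Type} [Field F]
  {K : Fin ℓ → Type} [∀ i, Field (K i)] [∀ i, Algebra (K i) F]

/-- `Rk(L) = ∑ i, dim_{K i} (L i)`. -/
noncomputable def SRrk (L : SRLat ℓ nv K) : ℕ := ∑ i, finrank (K i) (L i)

/-- Orthogonal complement of a subspace of `k^m` with respect to the standard
dot product. -/
def SRorth {k : Type} [Field k] {m : ℕ} (W : Submodule k (Fin m → k)) :
    Submodule k (Fin m → k) where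
  carrier := {v | ∀ w ∈ W, ∑ t, v t * w t = 0}
  zero_mem' := by intro w hw; simp
  add_mem' := by
    intro a b ha hb w hw
    have h : ∑ t, (a + b) t * w t = (∑ t, a t * w t) + ∑ t, b t * w t := by
      simp [add_mul, Finset.sum_add_distrib]
    rw [h, ha w hw, hb w hw, add_zero]
  smul_mem' := by
    intro c a ha w hw
    have h : ∑ t, (c • a) t * w t = c * ∑ t, a t * w t := by
      simp [Finset.mul_sum, mul_assoc]
    rw [h, ha w hw, mul_zero]

/-- Componentwise orthogonal complement `L^⊥` in the lattice `P(K^n)`. -/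
def SRlatPerp (L : SRLat ℓ nv K) : SRLat ℓ nv K := fun i => SRorth (L i)

/-- The `i`-th component of the sum-rank support of `c ∈ F^n`: the `K i`-row
space of the coordinate matrix of the `i`-th block of `c` (described
basis-freely as the span of the images of the block of `c` under all
`K i`-linear functionals `F → K i`). -/
def SRsupp (c : SRAmb ℓ nv F) (i : Fin ℓ) : Submodule (K i) (Fin (nv i) → K i) :=
  Submodule.span (K i) {v | ∃ f : F →ₗ[K i] K i, v = fun t => f (c i t)}

/-- The sum-rank weight `srank(c) = Rk(supp(c))`. -/
noncomputable def SRwt (c : SRAmb ℓ nv F) : ℕ :=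
  ∑ i, finrank (K i) (SRsupp (K := K) c i)

/-- The sum-rank support space `V_L = {c ∈ F^n : supp(c) ⊆ L}`. -/
def SRVL (L : SRLat ℓ nv K) : Submodule F (SRAmb ℓ nv F) where
  carrier := {c | ∀ i, SRsupp (K := K) c i ≤ L i}
  zero_mem' := by
    intro i
    apply Submodule.span_le.mpr
    rintro v ⟨f, rfl⟩
    have h : (fun t => f ((0 : SRAmb ℓ nv F) i t)) = (0 : Fin (nv i) → K i) := by
      funext t; simp
    rw [h]
    exact (L i).zero_mem
  add_mem' := by
    intro a b ha hb i
    apply Submodule.span_le.mpr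
    rintro v ⟨f, rfl⟩
    have h : (fun t => f ((a + b) i t)) =
        (fun t => f (a i t)) + fun t => f (b i t) := by
      funext t; simp
    rw [h]
    exact (L i).add_mem (ha i (Submodule.subset_span ⟨f, rfl⟩))
      (hb i (Submodule.subset_span ⟨f, rfl⟩))
  smul_mem' := by
    intro x a ha i
    apply Submodule.span_le.mpr
    rintro v ⟨f, rfl⟩
    have h : (fun t => f ((x • a) i t)) =
        fun t => (f.comp (LinearMap.mulLeft (K i) x)) (a i t) := by
      funext t; simp [smul_eq_mul]
    rw [h]
    exact ha i (Submodule.subset_span ⟨_, rfl⟩)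

/-- The dual code `C^⊥` with respect to the standard bilinear form on `F^n`. -/
def SRdual (C : Submodule F (SRAmb ℓ nv F)) : Submodule F (SRAmb ℓ nv F) where
  carrier := {x | ∀ c ∈ C, ∑ i, ∑ t, x i t * c i t = 0}
  zero_mem' := by intro c hc; simp
  add_mem' := by
    intro a b ha hb c hc
    have h : ∑ i, ∑ t, (a + b) i t * c i t =
        (∑ i, ∑ t, a i t * c i t) + ∑ i, ∑ t, b i t * c i t := by
      simp [add_mul, Finset.sum_add_distrib]
    rw [h, ha c hc, hb c hc, add_zero]
  smul_mem' := by
    intro x a ha c hc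
    have h : ∑ i, ∑ t, (x • a) i t * c i t = x * ∑ i, ∑ t, a i t * c i t := by
      simp [Finset.mul_sum, mul_assoc]
    rw [h, ha c hc, mul_zero]

/-- `C(L) = {c ∈ C^⊥ : supp(c) ⊆ L^⊥} = C^⊥ ∩ V_{L^⊥}`. -/
def SRCL (C : Submodule F (SRAmb ℓ nv F)) (L : SRLat ℓ nv K) :
    Submodule F (SRAmb ℓ nv F) :=
  SRdual C ⊓ SRVL (SRlatPerp L)

/-- The projection `Π_L : F^n → F^{Rk L}`, `x ↦ x Aᵀ`, where
`A = diag(A_1, …, A_ℓ)` and `A_i` is the matrix whose rows are the chosen basis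
of `L i` over `K i`.  The target `F^{Rk L}` is indexed blockwise. -/
noncomputable def SRpi (L : SRLat ℓ nv K) :
    SRAmb ℓ nv F →ₗ[F] ((i : Fin ℓ) → Fin (finrank (K i) (L i)) → F) where
  toFun x := fun i j =>
    ∑ t, x i t * algebraMap (K i) F ((Module.finBasis (K i) (L i) j).val t)
  map_add' x y := by
    funext i j
    simp [add_mul, Finset.sum_add_distrib]
  map_smul' a x := by
    funext i j
    simp [Finset.mul_sum, mul_assoc]

/-- The rank function `ρ_C(L) = dim_F Π_L(C^⊥)` of the sum-matroid associated
to the code `C`. -/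
noncomputable def SRrho (C : Submodule F (SRAmb ℓ nv F)) (L : SRLat ℓ nv K) : ℕ :=
  finrank F (Submodule.map (SRpi (F := F) L) (SRdual C))

/-- Minimum sum-rank distance of a code. -/
noncomputable def SRminDist (K : Fin ℓ → Type) [∀ i, Field (K i)]
    [∀ i, Algebra (K i) F] (C : Submodule F (SRAmb ℓ nv F)) : ℕ :=
  sInf {w | ∃ c ∈ C, c ≠ 0 ∧ SRwt (K := K) c = w}

/-- The `r`-th generalized sum-rank weight
`d_{SR,r}(C) = min{Rk L : dim_F (C ∩ V_L) ≥ r}`. -/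
noncomputable def SRdgw (K : Fin ℓ → Type) [∀ i, Field (K i)]
    [∀ i, Algebra (K i) F] (C : Submodule F (SRAmb ℓ nv F)) (r : ℕ) : ℕ :=
  sInf {w | ∃ L : SRLat ℓ nv K, r ≤ finrank F ↥(C ⊓ SRVL L) ∧ SRrk L = w}

/-- The sum-matroid axioms (R1), (R2), (R3) for a function `ρ : P(K^n) → ℕ`. -/
def IsSumMatroid (ρ : SRLat ℓ nv K → ℕ) : Prop :=
  (∀ L, ρ L ≤ SRrk L) ∧
  (∀ L L' : SRLat ℓ nv K, L ≤ L' → ρ L ≤ ρ L') ∧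
  (∀ L L' : SRLat ℓ nv K, ρ (L ⊔ L') + ρ (L ⊓ L') ≤ ρ L + ρ L')

/-- The dual rank function `ρ*(L) = ρ(L^⊥) + Rk L − ρ(K^n)`. -/
noncomputable def SRdualRk (ρ : SRLat ℓ nv K → ℕ) (L : SRLat ℓ nv K) : ℕ :=
  ρ (SRlatPerp L) + SRrk L - ρ ⊤

/-- The nullity function `η(L) = Rk L − ρ(L)`. -/
noncomputable def SReta (ρ : SRLat ℓ nv K → ℕ) (L : SRLat ℓ nv K) : ℕ :=
  SRrk L - ρ L

/-- The `i`-th generalized weight of a sum-matroid,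
`d_i(M) = min{Rk L : η(L) = i}`. -/
noncomputable def SRgw (ρ : SRLat ℓ nv K → ℕ) (i : ℕ) : ℕ :=
  sInf {w | ∃ L : SRLat ℓ nv K, SReta ρ L = i ∧ SRrk L = w}


section Aux
open Module

variable {k' : Type} [Field k'] {m : ℕ}

private lemma dot_eq_toDualEquiv (v w : Fin m → k') :
    (Pi.basisFun k' (Fin m)).toDualEquiv v w = ∑ t, v t * w t := by
  have h : ((Pi.basisFun k' (Fin m)).toDualEquiv v : Module.Dual k' (Fin m → k')) =
      { toFun := fun w => ∑ t, v t * w t,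
        map_add' := fun a b => by simp [mul_add, Finset.sum_add_distrib],
        map_smul' := fun c a => by simp [Finset.mul_sum, mul_left_comm] } := by
    apply (Pi.basisFun k' (Fin m)).ext
    intro i
    rw [Basis.toDualEquiv_apply, Basis.toDual_apply_left, Pi.basisFun_repr]
    simp [Pi.basisFun_apply, Pi.single_apply, mul_ite, Finset.sum_ite_eq]
  rw [h]; rfl

private lemma mem_SRorth {W : Submodule k' (Fin m → k')} {v : Fin m → k'} :
    v ∈ SRorth W ↔ ∀ w ∈ W, ∑ t, v t * w t = 0 := Iff.rfl

private lemma SRorth_eq_comap (W : Submodule k' (Fin m → k')) :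
    SRorth W = Submodule.comap
      ((Pi.basisFun k' (Fin m)).toDualEquiv : (Fin m → k') →ₗ[k'] Module.Dual k' (Fin m → k'))
      W.dualAnnihilator := by
  ext v
  simp only [mem_SRorth, Submodule.mem_comap, Submodule.mem_dualAnnihilator, LinearEquiv.coe_coe,
    dot_eq_toDualEquiv]

private lemma SRorth_finrank_add (W : Submodule k' (Fin m → k')) :
    finrank k' (SRorth W) + finrank k' W = m := by
  rw [SRorth_eq_comap, Submodule.comap_equiv_eq_map_symm, LinearEquiv.finrank_map_eq]
  have h1 := Submodule.finrank_quotient_add_finrank W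
  have h2 := LinearEquiv.finrank_eq (R := k') (M := (Fin m → k') ⧸ W) (N := W.dualAnnihilator) (Subspace.quotEquivAnnihilator W)
  have h3 : finrank k' (Fin m → k') = m := by
    rw [Module.finrank_pi]; simp
  omega

private lemma SRorth_orth (W : Submodule k' (Fin m → k')) : SRorth (SRorth W) = W := by
  have hle : W ≤ SRorth (SRorth W) := by
    intro w hw v hv
    have := hv w hw
    calc ∑ t, w t * v t = ∑ t, v t * w t := by simp [mul_comm]
    _ = 0 := this
  have h1 := SRorth_finrank_add W
  have h2 := SRorth_finrank_add (SRorth W)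
  exact (Submodule.eq_of_le_of_finrank_le hle (by omega)).symm

private lemma exists_le_finrank_pred {V : Type} [AddCommGroup V] [Module k' V]
    [FiniteDimensional k' V] (W : Submodule k' V) (h : 0 < finrank k' W) :
    ∃ W' : Submodule k' V, W' ≤ W ∧ finrank k' W' + 1 = finrank k' W := by
  set s := finrank k' W - 1 with hs
  let b := Module.finBasis k' W
  let v : Fin s → W := fun j => b (Fin.castLE (by omega) j)
  have hli : LinearIndependent k' v :=
    b.linearIndependent.comp _ (fun a b hab => by
      simpa [Fin.ext_iff] using congrArg (Fin.val) hab)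
  have hfr : finrank k' (Submodule.span k' (Set.range v)) = s := by
    rw [finrank_span_eq_card hli]; simp
  refine ⟨Submodule.map W.subtype (Submodule.span k' (Set.range v)),
    Submodule.map_subtype_le _ _, ?_⟩
  rw [Submodule.finrank_map_subtype_eq, hfr]
  omega

end Aux

section Aux2
open Module

variable {ℓ : ℕ} {nv : Fin ℓ → ℕ} {K : Fin ℓ → Type} [∀ i, Field (K i)]

private lemma SRrk_top : SRrk (⊤ : SRLat ℓ nv K) = ∑ i, nv i := by
  unfold SRrk
  refine Finset.sum_congr rfl fun i _ => ?_
  rw [Pi.top_apply, finrank_top, Module.finrank_pi]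
  simp

private lemma SRrk_le (L : SRLat ℓ nv K) : SRrk L ≤ ∑ i, nv i := by
  unfold SRrk
  refine Finset.sum_le_sum fun i _ => ?_
  have := Submodule.finrank_le (L i)
  rwa [Module.finrank_pi, Fintype.card_fin] at this

private lemma SRrk_perp_add (L : SRLat ℓ nv K) :
    SRrk (SRlatPerp L) + SRrk L = ∑ i, nv i := by
  unfold SRrk SRlatPerp
  rw [← Finset.sum_add_distrib]
  exact Finset.sum_congr rfl fun i _ => SRorth_finrank_add (L i)

private lemma SRlatPerp_perp (L : SRLat ℓ nv K) : SRlatPerp (SRlatPerp L) = L := by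
  funext i
  exact SRorth_orth (L i)

private lemma exists_SReta_eq (ρ : SRLat ℓ nv K → ℕ) (hρ : IsSumMatroid ρ) (r : ℕ)
    (hr : r ≤ SReta ρ (⊤ : SRLat ℓ nv K)) :
    ∃ L : SRLat ℓ nv K, SReta ρ L = r := by
  obtain ⟨hR1, hR2, hR3⟩ := hρ
  set T : Set ℕ := {w | ∃ L : SRLat ℓ nv K, r ≤ SReta ρ L ∧ SRrk L = w} with hT
  have hTne : T.Nonempty := ⟨SRrk (⊤ : SRLat ℓ nv K), ⊤, hr, rfl⟩
  obtain ⟨L₀, h1, h2⟩ := Nat.sInf_mem hTne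
  rcases eq_or_lt_of_le h1 with heq | hlt
  · exact ⟨L₀, heq.symm⟩
  exfalso
  have hρ0 := hR1 L₀
  have heta : SReta ρ L₀ = SRrk L₀ - ρ L₀ := rfl
  have hRk1 : ρ L₀ + r + 1 ≤ SRrk L₀ := by omega
  have hex : ∃ i, 0 < finrank (K i) (L₀ i) := by
    by_contra hc
    push_neg at hc
    have : SRrk L₀ = 0 := Finset.sum_eq_zero fun i _ => by have := hc i; omega
    omega
  obtain ⟨i, hi⟩ := hex
  obtain ⟨W', hW'le, hW'fr⟩ := exists_le_finrank_pred (L₀ i) hi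
  set L' : SRLat ℓ nv K := Function.update L₀ i W' with hL'
  have hle : L' ≤ L₀ := by
    intro j
    by_cases hji : j = i
    · subst hji; simp [hL', Function.update_self, hW'le]
    · simp [hL', Function.update_of_ne hji]
  have hsplit : ∀ M : SRLat ℓ nv K, SRrk M =
      finrank (K i) (M i) + ∑ j ∈ Finset.univ.erase i, finrank (K j) (M j) :=
    fun M => (Finset.add_sum_erase _ _ (Finset.mem_univ i)).symm
  have hrest : ∑ j ∈ Finset.univ.erase i, finrank (K j) (L' j) =
      ∑ j ∈ Finset.univ.erase i, finrank (K j) (L₀ j) :=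
    Finset.sum_congr rfl fun j hj => by
      rw [hL', Function.update_of_ne (Finset.ne_of_mem_erase hj)]
  have hLi : finrank (K i) (L' i) = finrank (K i) W' := by
    rw [hL', Function.update_self]
  have hRk' : SRrk L' + 1 = SRrk L₀ := by
    have e1 := hsplit L'
    have e2 := hsplit L₀
    omega
  have hρ' : ρ L' ≤ ρ L₀ := hR2 _ _ hle
  have hη' : r ≤ SReta ρ L' := by
    have : SReta ρ L' = SRrk L' - ρ L' := rfl
    omega
  have := Nat.sInf_le (show SRrk L' ∈ T from ⟨L', hη', rfl⟩)
  omega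

end Aux2

/-- For a sum-matroid `M` of rank `k`, fix `1 ≤ r ≤ n − k` and
set `t = k + r − d_r`.  If `t ≥ 1` then `d_t^⊥ ≤ n − d_r`. -/
theorem stmt14_dual_gw_le
    {ℓ : ℕ} (hℓ : 0 < ℓ) {nv : Fin ℓ → ℕ} (hnv : ∀ i, 0 < nv i)
    {F : Type} [Field F] [Finite F]
    {K : Fin ℓ → Type} [∀ i, Field (K i)] [∀ i, Finite (K i)]
    [∀ i, Algebra (K i) F] [∀ i, FiniteDimensional (K i) F]
    (ρ : SRLat ℓ nv K → ℕ) (hρ : IsSumMatroid ρ)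
    (k : ℕ) (hk : ρ (⊤ : SRLat ℓ nv K) = k)
    (r : ℕ) (hr1 : 1 ≤ r) (hr2 : r ≤ (∑ i, nv i) - k)
    (ht : 1 ≤ k + r - SRgw ρ r) :
    SRgw (SRdualRk ρ) (k + r - SRgw ρ r) ≤ (∑ i, nv i) - SRgw ρ r := by
  classical
  obtain ⟨hR1, hR2, hR3⟩ := hρ
  set n := ∑ i, nv i with hn
  have htop : SRrk (⊤ : SRLat ℓ nv K) = n := SRrk_top
  have hkn : k ≤ n := by have := hR1 ⊤; omega
  have hηtop : r ≤ SReta ρ (⊤ : SRLat ℓ nv K) := by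
    have : SReta ρ (⊤ : SRLat ℓ nv K) = SRrk (⊤ : SRLat ℓ nv K) - ρ ⊤ := rfl
    omega
  obtain ⟨L₁, hL₁⟩ := exists_SReta_eq ρ ⟨hR1, hR2, hR3⟩ r hηtop
  have hSne : {w | ∃ L : SRLat ℓ nv K, SReta ρ L = r ∧ SRrk L = w}.Nonempty :=
    ⟨SRrk L₁, L₁, hL₁, rfl⟩
  obtain ⟨Ld, hη, hRk⟩ := Nat.sInf_mem hSne
  have hRkd : SRrk Ld = SRgw ρ r := hRk
  set d := SRgw ρ r with hd
  have hρLd : ρ Ld ≤ SRrk Ld := hR1 Ld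
  have hηLd : SRrk Ld - ρ Ld = r := hη
  have hρk : ρ Ld ≤ k := by have := hR2 Ld ⊤ le_top; omega
  have hdn : d ≤ n := by have := SRrk_le Ld; omega
  set P := SRlatPerp Ld with hP
  have hPrk : SRrk P + SRrk Ld = n := SRrk_perp_add Ld
  have hPP : SRlatPerp P = Ld := SRlatPerp_perp Ld
  have hetaP : SReta (SRdualRk ρ) P = k + r - d := by
    have h1 : SReta (SRdualRk ρ) P = SRrk P - SRdualRk ρ P := rfl
    have h2 : SRdualRk ρ P = ρ (SRlatPerp P) + SRrk P - ρ ⊤ := rfl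
    rw [hPP, hk] at h2
    omega
  have hle := Nat.sInf_le (show SRrk P ∈
      {w | ∃ L : SRLat ℓ nv K, SReta (SRdualRk ρ) L = k + r - d ∧ SRrk L = w} from
    ⟨P, hetaP, rfl⟩)
  have : SRgw (SRdualRk ρ) (k + r - d) ≤ SRrk P := hle
  omega
end

section
/- Let C be an [n,k;n_1,…,n_ℓ] sum-rank metric code over (F;K_1,…,K_ℓ) which is MSRD. Then the associated sum-matroid M_C = (K^n, ρ_C) is the uniform sum-matroid U_{n−k,n}; that is, for every L ∈ P(K^n), ρ_C(L) = Rk(L) if Rk(L) ≤ n−k, and ρ_C(L) = n−k if Rk(L) > n−k. -/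
open Module

variable {ℓ : ℕ} {nv : Fin ℓ → ℕ} {F : Type} [Field F]
  {K : Fin ℓ → Type} [∀ i, Field (K i)] [∀ i, Algebra (K i) F]

/-! ### Auxiliary material for the proof of Statement 16 -/

section Aux16

open Module Submodule

/-- The standard dot-product bilinear form on `k^m`. -/
noncomputable def dotB (kk : Type) [Field kk] (m : ℕ) :
    LinearMap.BilinForm kk (Fin m → kk) :=
  LinearMap.mk₂ kk (fun x y => ∑ t, x t * y t)
    (fun x x' y => by simp [add_mul, Finset.sum_add_distrib])
    (fun a x y => by simp [Finset.mul_sum, mul_assoc])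
    (fun x y y' => by simp [mul_add, Finset.sum_add_distrib])
    (fun a x y => by
      simp only [Pi.smul_apply, smul_eq_mul, Finset.mul_sum]
      exact Finset.sum_congr rfl fun t _ => by ring)

lemma dotB_apply {kk : Type} [Field kk] {m : ℕ} (x y : Fin m → kk) :
    dotB kk m x y = ∑ t, x t * y t := rfl

lemma dotB_refl (kk : Type) [Field kk] (m : ℕ) : (dotB kk m).IsRefl := by
  intro x y h
  rw [dotB_apply] at h ⊢
  rw [← h]
  exact Finset.sum_congr rfl fun t _ => mul_comm _ _

lemma dotB_nondeg (kk : Type) [Field kk] (m : ℕ) : (dotB kk m).Nondegenerate := by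
  refine (LinearMap.IsRefl.nondegenerate_iff_separatingLeft (B := dotB kk m)
    (fun x y h => dotB_refl kk m x y h)).mpr ?_
  intro x hx
  funext t
  have h := hx (Pi.single t 1)
  rw [dotB_apply] at h
  simpa [Pi.single_apply, Finset.sum_ite_eq'] using h

lemma SRorth_eq_orthogonal {kk : Type} [Field kk] {m : ℕ} (W : Submodule kk (Fin m → kk)) :
    SRorth W = (dotB kk m).orthogonal W := by
  ext x
  have hcomm : ∀ a b : Fin m → kk, ∑ t, a t * b t = ∑ t, b t * a t :=
    fun a b => Finset.sum_congr rfl fun t _ => mul_comm _ _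
  constructor
  · intro hx w hw
    show dotB kk m w x = 0
    rw [dotB_apply, hcomm]
    exact hx w hw
  · intro hx w hw
    have h := hx w hw
    show ∑ t, x t * w t = 0
    rw [hcomm]
    exact h

lemma finrank_SRorth {kk : Type} [Field kk] {m : ℕ} (W : Submodule kk (Fin m → kk)) :
    finrank kk W + finrank kk (SRorth W) = m := by
  rw [SRorth_eq_orthogonal]
  have h := LinearMap.BilinForm.finrank_orthogonal (dotB_nondeg kk m) W
  have h2 : finrank kk W ≤ finrank kk (Fin m → kk) := W.finrank_le
  rw [Module.finrank_fin_fun] at h h2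
  omega

/-- The standard bilinear form on the ambient space `F^n`. -/
noncomputable def ambB (ℓ : ℕ) (nv : Fin ℓ → ℕ) (F : Type) [Field F] :
    LinearMap.BilinForm F (SRAmb ℓ nv F) :=
  LinearMap.mk₂ F (fun x y => ∑ i, ∑ t, x i t * y i t)
    (fun x x' y => by simp [add_mul, Finset.sum_add_distrib])
    (fun a x y => by simp [Finset.mul_sum, mul_assoc])
    (fun x y y' => by simp [mul_add, Finset.sum_add_distrib])
    (fun a x y => by
      simp only [Pi.smul_apply, smul_eq_mul, Finset.mul_sum]
      exact Finset.sum_congr rfl fun i _ => Finset.sum_congr rfl fun t _ => by ring)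

lemma ambB_apply (x y : SRAmb ℓ nv F) :
    ambB ℓ nv F x y = ∑ i, ∑ t, x i t * y i t := rfl

lemma ambB_refl : (ambB ℓ nv F).IsRefl := by
  intro x y h
  rw [ambB_apply] at h ⊢
  rw [← h]
  exact Finset.sum_congr rfl fun i _ => Finset.sum_congr rfl fun t _ => mul_comm _ _

lemma ambB_nondeg : (ambB ℓ nv F).Nondegenerate := by
  refine (LinearMap.IsRefl.nondegenerate_iff_separatingLeft (B := ambB ℓ nv F)
    (fun x y h => ambB_refl x y h)).mpr ?_
  intro x hx
  funext i t
  have h := hx (Pi.single i (Pi.single t 1))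
  rw [ambB_apply] at h
  rw [Finset.sum_eq_single i (fun i' _ hne => ?_) (by simp)] at h
  · rw [Finset.sum_eq_single t (fun t' _ hne => ?_) (by simp)] at h
    · rw [Pi.single_eq_same, Pi.single_eq_same, mul_one] at h
      exact h
    · rw [Pi.single_eq_same, Pi.single_eq_of_ne hne, mul_zero]
  · rw [Pi.single_eq_of_ne hne]
    simp

lemma finrank_SRAmb : finrank F (SRAmb ℓ nv F) = ∑ i, nv i := by
  simp [Module.finrank_pi_fintype, Module.finrank_fin_fun]

lemma mem_SRdual_iff {C : Submodule F (SRAmb ℓ nv F)} {x : SRAmb ℓ nv F} :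
    x ∈ SRdual C ↔ ∀ c ∈ C, ∑ i, ∑ t, x i t * c i t = 0 := Iff.rfl

lemma SRdual_eq_orthogonal (C : Submodule F (SRAmb ℓ nv F)) :
    SRdual C = (ambB ℓ nv F).orthogonal C := by
  ext x
  have hcomm : ∀ a b : SRAmb ℓ nv F, ∑ i, ∑ t, a i t * b i t = ∑ i, ∑ t, b i t * a i t :=
    fun a b => Finset.sum_congr rfl fun i _ => Finset.sum_congr rfl fun t _ => mul_comm _ _
  constructor
  · intro hx w hw
    show ambB ℓ nv F w x = 0
    rw [ambB_apply, hcomm]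
    exact hx w hw
  · intro hx w hw
    have h := hx w hw
    show ∑ i, ∑ t, x i t * w i t = 0
    rw [hcomm]
    exact h

lemma finrank_SRdual (C : Submodule F (SRAmb ℓ nv F)) :
    finrank F C + finrank F (SRdual C) = ∑ i, nv i := by
  rw [SRdual_eq_orthogonal]
  have h := LinearMap.BilinForm.finrank_orthogonal ambB_nondeg C
  have h2 : finrank F C ≤ finrank F (SRAmb ℓ nv F) := C.finrank_le
  rw [finrank_SRAmb] at h h2
  omega

lemma aux_indep {kk FF : Type} [Field kk] [Field FF] [Algebra kk FF] {d m : ℕ}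
    {v : Fin d → Fin m → kk} (hv : LinearIndependent kk v) :
    LinearIndependent FF (fun j => fun t => algebraMap kk FF (v j t)) := by
  rw [Fintype.linearIndependent_iff]
  intro g hg j
  let b := Basis.ofVectorSpace kk FF
  refine (b.forall_coord_eq_zero_iff).mp (fun a => ?_)
  refine (Fintype.linearIndependent_iff.mp hv) (fun j' => b.coord a (g j')) ?_ j
  funext t
  have h1 : ∑ j', g j' * algebraMap kk FF (v j' t) = 0 := by
    have h0 := congrFun hg t
    simpa using h0
  have h2 := congrArg (b.coord a) h1
  rw [map_sum, map_zero] at h2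
  have h3 : ∀ j', b.coord a (g j' * algebraMap kk FF (v j' t)) = b.coord a (g j') * v j' t := by
    intro j'
    rw [mul_comm, ← Algebra.smul_def, map_smul, smul_eq_mul, mul_comm]
  rw [Finset.sum_congr rfl (fun j' _ => h3 j')] at h2
  simpa [Finset.sum_apply] using h2

/-- The chosen basis vectors of `L i`, viewed inside the ambient `K i ^ (nv i)`. -/
noncomputable def Lbasis (L : SRLat ℓ nv K) (i : Fin ℓ) :
    Fin (finrank (K i) (L i)) → (Fin (nv i) → K i) :=
  fun j => ((Module.finBasis (K i) (L i)) j : Fin (nv i) → K i)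

lemma Lbasis_mem (L : SRLat ℓ nv K) (i : Fin ℓ) (j : Fin (finrank (K i) (L i))) :
    Lbasis L i j ∈ L i := ((Module.finBasis (K i) (L i)) j).2

lemma Lbasis_indep (L : SRLat ℓ nv K) (i : Fin ℓ) :
    LinearIndependent (K i) (Lbasis L i) :=
  (Module.finBasis (K i) (L i)).linearIndependent.map' (L i).subtype
    (Submodule.ker_subtype _)

/-- The block-diagonal "co-projection" `F^{Rk L} → F^n`, `y ↦ y A`. -/
noncomputable def SRPhi (L : SRLat ℓ nv K) :
    ((i : Fin ℓ) → Fin (finrank (K i) (L i)) → F) →ₗ[F] SRAmb ℓ nv F where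
  toFun y := fun i t => ∑ j, y i j * algebraMap (K i) F (Lbasis L i j t)
  map_add' x y := by
    funext i t
    simp [add_mul, Finset.sum_add_distrib]
  map_smul' a x := by
    funext i t
    simp [Finset.mul_sum, mul_assoc]

lemma SRPhi_apply (L : SRLat ℓ nv K) (y : (i : Fin ℓ) → Fin (finrank (K i) (L i)) → F)
    (i : Fin ℓ) (t : Fin (nv i)) :
    SRPhi (F := F) L y i t = ∑ j, y i j * algebraMap (K i) F (Lbasis L i j t) := rfl

lemma SRpi_apply (L : SRLat ℓ nv K) (x : SRAmb ℓ nv F) (i : Fin ℓ)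
    (j : Fin (finrank (K i) (L i))) :
    SRpi (F := F) L x i j = ∑ t, x i t * algebraMap (K i) F (Lbasis L i j t) := rfl

lemma SRPhi_inj (L : SRLat ℓ nv K) : Function.Injective (SRPhi (F := F) L) := by
  rw [← LinearMap.ker_eq_bot, LinearMap.ker_eq_bot']
  intro y hy
  funext i j
  have hind := aux_indep (FF := F) (Lbasis_indep L i)
  have h0 : ∑ j', y i j' • (fun t => algebraMap (K i) F (Lbasis L i j' t)) = 0 := by
    funext t
    have h1 := congrFun (congrFun hy i) t
    rw [SRPhi_apply] at h1
    simpa [Finset.sum_apply] using h1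
  have h2 := Fintype.linearIndependent_iff.mp hind (y i) h0 j
  simpa using h2

lemma range_SRPhi_le (L : SRLat ℓ nv K) :
    LinearMap.range (SRPhi (F := F) L) ≤ SRVL (F := F) (K := K) L := by
  rintro c ⟨y, rfl⟩ i
  apply Submodule.span_le.mpr
  rintro v ⟨f, rfl⟩
  have hfun : (fun t => f (SRPhi (F := F) L y i t)) =
      ∑ j, f (y i j) • Lbasis L i j := by
    funext t
    rw [SRPhi_apply, map_sum]
    rw [Finset.sum_apply]
    refine Finset.sum_congr rfl fun j _ => ?_
    rw [Pi.smul_apply, smul_eq_mul, mul_comm (y i j) _, ← Algebra.smul_def, map_smul,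
      smul_eq_mul, mul_comm]
  rw [hfun]
  exact Submodule.sum_mem _ fun j _ => Submodule.smul_mem _ _ (Lbasis_mem L i j)

lemma SRrk_le_finrank_SRVL (L : SRLat ℓ nv K) :
    SRrk L ≤ finrank F (SRVL (F := F) (K := K) L) := by
  have h1 : finrank F (LinearMap.range (SRPhi (F := F) L)) = SRrk L := by
    rw [LinearMap.finrank_range_of_inj (SRPhi_inj L)]
    simp [SRrk, Module.finrank_pi_fintype, Module.finrank_fin_fun]
  rw [← h1]
  exact Submodule.finrank_mono (range_SRPhi_le L)

lemma pairing_zero [∀ i, FiniteDimensional (K i) F] (L : SRLat ℓ nv K)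
    {c x : SRAmb ℓ nv F} (hc : c ∈ SRVL (F := F) (K := K) L) (hx : x ∈ SRVL (F := F) (SRlatPerp L)) :
    ∑ i, ∑ t, c i t * x i t = 0 := by
  refine Finset.sum_eq_zero fun i _ => ?_
  set b := Module.finBasis (K i) F with hb
  have hX : ∀ a, (fun t => b.repr (c i t) a) ∈ L i := fun a =>
    hc i (Submodule.subset_span ⟨b.coord a, by funext t; simp [Basis.coord_apply]⟩)
  have hY : ∀ a, (fun t => b.repr (x i t) a) ∈ SRorth (L i) := fun a =>
    hx i (Submodule.subset_span ⟨b.coord a, by funext t; simp [Basis.coord_apply]⟩)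
  have horth : ∀ a a', ∑ t, b.repr (c i t) a * b.repr (x i t) a' = 0 := by
    intro a a'
    have h := hY a' _ (hX a)
    calc ∑ t, b.repr (c i t) a * b.repr (x i t) a'
        = ∑ t, b.repr (x i t) a' * b.repr (c i t) a :=
          Finset.sum_congr rfl fun t _ => mul_comm _ _
      _ = 0 := h
  calc ∑ t, c i t * x i t
      = ∑ t, ∑ a, ∑ a', (b.repr (c i t) a * b.repr (x i t) a') • (b a * b a') := by
        refine Finset.sum_congr rfl fun t _ => ?_
        conv_lhs => rw [← b.sum_repr (c i t), ← b.sum_repr (x i t)]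
        rw [Finset.sum_mul]
        refine Finset.sum_congr rfl fun a _ => ?_
        rw [Finset.mul_sum]
        refine Finset.sum_congr rfl fun a' _ => ?_
        rw [Algebra.smul_def, Algebra.smul_def, Algebra.smul_def, map_mul]
        ring
    _ = ∑ a, ∑ a', (∑ t, b.repr (c i t) a * b.repr (x i t) a') • (b a * b a') := by
        rw [Finset.sum_comm]
        refine Finset.sum_congr rfl fun a _ => ?_
        rw [Finset.sum_comm]
        refine Finset.sum_congr rfl fun a' _ => ?_
        rw [← Finset.sum_smul]
    _ = 0 := by
        refine Finset.sum_eq_zero fun a _ => Finset.sum_eq_zero fun a' _ => ?_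
        rw [horth, zero_smul]

lemma SRVL_perp_le_dual [∀ i, FiniteDimensional (K i) F] (L : SRLat ℓ nv K) :
    SRVL (F := F) (SRlatPerp L) ≤ SRdual (SRVL (F := F) (K := K) L) := by
  intro x hx
  rw [mem_SRdual_iff]
  intro c hc
  calc ∑ i, ∑ t, x i t * c i t
      = ∑ i, ∑ t, c i t * x i t :=
        Finset.sum_congr rfl fun i _ => Finset.sum_congr rfl fun t _ => mul_comm _ _
    _ = 0 := pairing_zero L hc hx

lemma SRrk_add_perp (L : SRLat ℓ nv K) :
    SRrk L + SRrk (SRlatPerp L) = ∑ i, nv i := by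
  rw [SRrk, SRrk, ← Finset.sum_add_distrib]
  exact Finset.sum_congr rfl fun i _ => finrank_SRorth (L i)

lemma finrank_SRVL [∀ i, FiniteDimensional (K i) F] (L : SRLat ℓ nv K) :
    finrank F (SRVL (F := F) (K := K) L) = SRrk L := by
  have h1 := SRrk_le_finrank_SRVL (F := F) L
  have h2 := SRrk_le_finrank_SRVL (F := F) (SRlatPerp L)
  have h3 := finrank_SRdual (SRVL (F := F) (K := K) L)
  have h4 := Submodule.finrank_mono (SRVL_perp_le_dual (F := F) L)
  have h5 := SRrk_add_perp L
  omega

lemma finrank_SRVL_perp [∀ i, FiniteDimensional (K i) F] (L : SRLat ℓ nv K) :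
    finrank F (SRVL (F := F) (K := K) (SRlatPerp L)) = SRrk (SRlatPerp L) := by
  have h1 := SRrk_le_finrank_SRVL (F := F) L
  have h2 := SRrk_le_finrank_SRVL (F := F) (SRlatPerp L)
  have h3 := finrank_SRdual (SRVL (F := F) (K := K) L)
  have h4 := Submodule.finrank_mono (SRVL_perp_le_dual (F := F) L)
  have h5 := SRrk_add_perp L
  omega

lemma SRdual_SRVL [∀ i, FiniteDimensional (K i) F] (L : SRLat ℓ nv K) :
    SRdual (SRVL (F := F) (K := K) L) = SRVL (F := F) (SRlatPerp L) := by
  refine (Submodule.eq_of_le_of_finrank_eq (SRVL_perp_le_dual (F := F) L) ?_).symm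
  have h3 := finrank_SRdual (SRVL (F := F) (K := K) L)
  have h5 := SRrk_add_perp L
  have h6 := finrank_SRVL (F := F) L
  have h7 := finrank_SRVL_perp (F := F) L
  omega

lemma ker_SRpi [∀ i, FiniteDimensional (K i) F] (L : SRLat ℓ nv K) :
    LinearMap.ker (SRpi (F := F) L) = SRVL (F := F) (SRlatPerp L) := by
  ext x
  rw [LinearMap.mem_ker]
  constructor
  · intro hx i
    apply Submodule.span_le.mpr
    rintro v ⟨f, rfl⟩
    intro w hw
    have hzero : ∀ j, ∑ t, f (x i t) * Lbasis L i j t = 0 := by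
      intro j
      have h1 : ∑ t, f (x i t) * Lbasis L i j t
          = f (∑ t, x i t * algebraMap (K i) F (Lbasis L i j t)) := by
        rw [map_sum]
        refine Finset.sum_congr rfl fun t _ => ?_
        rw [mul_comm (x i t) _, ← Algebra.smul_def, map_smul, smul_eq_mul, mul_comm]
      rw [h1, ← SRpi_apply]
      rw [congrFun (congrFun hx i) j]
      simp
    obtain ⟨r, rfl⟩ : ∃ r : Fin (finrank (K i) (L i)) → K i,
        ∑ j, r j • Lbasis L i j = w :=
      ⟨fun j => (Module.finBasis (K i) (L i)).repr ⟨w, hw⟩ j, by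
        have h := congrArg Subtype.val ((Module.finBasis (K i) (L i)).sum_repr ⟨w, hw⟩)
        rw [Submodule.coe_sum] at h
        simpa only [Submodule.coe_smul, Lbasis] using h⟩
    simp only [Finset.sum_apply, Pi.smul_apply, smul_eq_mul, Finset.mul_sum]
    rw [Finset.sum_comm]
    refine Finset.sum_eq_zero fun j _ => ?_
    have hre : ∀ t, f (x i t) * (r j * Lbasis L i j t)
        = r j * (f (x i t) * Lbasis L i j t) := fun t => by ring
    rw [Finset.sum_congr rfl fun t _ => hre t, ← Finset.mul_sum, hzero j, mul_zero]
  · intro hx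
    funext i j
    have hc : SRPhi (F := F) L (Pi.single i (Pi.single j 1)) ∈ SRVL (F := F) (K := K) L :=
      range_SRPhi_le L ⟨_, rfl⟩
    have hp := pairing_zero L hc hx
    rw [Finset.sum_eq_single i (fun i' _ hne => ?_) (by simp)] at hp
    · have hst : ∀ t, SRPhi (F := F) L (Pi.single i (Pi.single j 1)) i t
          = algebraMap (K i) F (Lbasis L i j t) := by
        intro t
        rw [SRPhi_apply]
        rw [Finset.sum_eq_single j (fun j' _ hne => ?_) (by simp)]
        · rw [Pi.single_eq_same, Pi.single_eq_same, one_mul]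
        · rw [Pi.single_eq_same, Pi.single_eq_of_ne hne, zero_mul]
      rw [Finset.sum_congr rfl (fun t _ => by rw [hst t])] at hp
      show SRpi (F := F) L x i j = 0
      rw [SRpi_apply, ← hp]
      exact Finset.sum_congr rfl fun t _ => mul_comm _ _
    · refine Finset.sum_eq_zero fun t _ => ?_
      rw [SRPhi_apply]
      rw [Pi.single_eq_of_ne hne]
      simp

lemma SRrho_eq [∀ i, FiniteDimensional (K i) F] (C : Submodule F (SRAmb ℓ nv F))
    (L : SRLat ℓ nv K) :
    SRrho C L + finrank F ↥(SRdual C ⊓ SRVL (F := F) (SRlatPerp L)) = finrank F ↥(SRdual C) := by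
  have h := LinearMap.finrank_range_add_finrank_ker
    ((SRpi (F := F) L).comp (SRdual C).subtype)
  rw [LinearMap.range_comp, Submodule.range_subtype, LinearMap.ker_comp, ker_SRpi] at h
  rw [SRrho, ← h]
  congr 1
  rw [← Submodule.map_comap_subtype, Submodule.finrank_map_subtype_eq]

lemma SRdual_sup (A B : Submodule F (SRAmb ℓ nv F)) :
    SRdual (A ⊔ B) = SRdual A ⊓ SRdual B := by
  ext x
  rw [Submodule.mem_inf]
  constructor
  · exact fun h => ⟨fun c hc => h c (Submodule.mem_sup_left hc),
      fun c hc => h c (Submodule.mem_sup_right hc)⟩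
  · rintro ⟨h1, h2⟩
    rw [mem_SRdual_iff]
    intro c hc
    obtain ⟨a, ha, b, hb, rfl⟩ := Submodule.mem_sup.mp hc
    have key : ∑ i, ∑ t, x i t * (a + b) i t
        = (∑ i, ∑ t, x i t * a i t) + ∑ i, ∑ t, x i t * b i t := by
      rw [← Finset.sum_add_distrib]
      refine Finset.sum_congr rfl fun i _ => ?_
      rw [← Finset.sum_add_distrib]
      exact Finset.sum_congr rfl fun t _ => by simp [mul_add]
    rw [key, h1 a ha, h2 b hb, add_zero]

lemma SRwt_le_of_mem {M : SRLat ℓ nv K} {c : SRAmb ℓ nv F} (hc : c ∈ SRVL (F := F) (K := K) M) :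
    SRwt (K := K) c ≤ SRrk M :=
  Finset.sum_le_sum fun i _ => Submodule.finrank_mono (hc i)

lemma mindist_le {C : Submodule F (SRAmb ℓ nv F)} {c : SRAmb ℓ nv F}
    (hc : c ∈ C) (hne : c ≠ 0) : SRminDist K C ≤ SRwt (K := K) c :=
  Nat.sInf_le ⟨c, hc, hne, rfl⟩

lemma inf_SRVL_eq_bot {C : Submodule F (SRAmb ℓ nv F)} {k : ℕ}
    (hmsrd : SRminDist K C = (∑ i, nv i) - k + 1)
    {M : SRLat ℓ nv K} (hM : SRrk M ≤ (∑ i, nv i) - k) : C ⊓ SRVL M = ⊥ := by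
  rw [eq_bot_iff]
  intro c hc
  rw [Submodule.mem_bot]
  by_contra hne
  have h1 := mindist_le (K := K) (Submodule.mem_inf.mp hc).1 hne
  have h2 := SRwt_le_of_mem (Submodule.mem_inf.mp hc).2
  rw [hmsrd] at h1
  omega

lemma exists_fun_sum_eq {ι : Type} [Fintype ι] (d : ι → ℕ) :
    ∀ s : ℕ, s ≤ ∑ i, d i → ∃ m : ι → ℕ, (∀ i, m i ≤ d i) ∧ ∑ i, m i = s := by
  classical
  intro s
  induction s with
  | zero => exact fun _ => ⟨fun _ => 0, fun _ => Nat.zero_le _, by simp⟩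
  | succ s ih =>
    intro hs
    obtain ⟨m, hm, hsum⟩ := ih (Nat.le_of_succ_le hs)
    have hex : ∃ i, m i < d i := by
      by_contra hcon
      push_neg at hcon
      have hle := Finset.sum_le_sum (s := (Finset.univ : Finset ι))
        (fun i _ => hcon i)
      omega
    obtain ⟨i0, hi0⟩ := hex
    refine ⟨Function.update m i0 (m i0 + 1), fun i => ?_, ?_⟩
    · rcases eq_or_ne i i0 with rfl | hne
      · rw [Function.update_self]; omega
      · rw [Function.update_of_ne hne]; exact hm i
    · rw [Finset.sum_update_of_mem (Finset.mem_univ i0)]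
      have h2 : ∑ x ∈ Finset.univ \ {i0}, m x + m i0 = s := by
        rw [← Finset.sum_eq_sum_sdiff_singleton_add (Finset.mem_univ i0) m, hsum]
      omega

lemma exists_sublat (L : SRLat ℓ nv K) (s : ℕ) (hs : s ≤ SRrk L) :
    ∃ L' : SRLat ℓ nv K, (∀ i, L' i ≤ L i) ∧ SRrk L' = s := by
  obtain ⟨m, hm, hsum⟩ := exists_fun_sum_eq (fun i => finrank (K i) (L i)) s hs
  refine ⟨fun i => Submodule.span (K i)
    (Set.range fun j : Fin (m i) => Lbasis L i (Fin.castLE (hm i) j)), fun i => ?_, ?_⟩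
  · exact Submodule.span_le.mpr (by rintro v ⟨j, rfl⟩; exact Lbasis_mem L i _)
  · rw [SRrk, ← hsum]
    refine Finset.sum_congr rfl fun i _ => ?_
    have hind : LinearIndependent (K i)
        (fun j : Fin (m i) => Lbasis L i (Fin.castLE (hm i) j)) :=
      (Lbasis_indep L i).comp _ (Fin.castLE_injective _)
    rw [finrank_span_eq_card hind, Fintype.card_fin]

end Aux16

/-- If an `[n,k]` sum-rank metric code `C` is MSRD, then the
associated sum-matroid `M_C = (K^n, ρ_C)` is the uniform sum-matroid
`U_{n−k,n}`: `ρ_C(L) = Rk L` whenever `Rk L ≤ n − k`, and `ρ_C(L) = n − k`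
whenever `Rk L > n − k`. -/
theorem stmt16_msrd_uniform
    {ℓ : ℕ} (hℓ : 0 < ℓ) {nv : Fin ℓ → ℕ} (hnv : ∀ i, 0 < nv i)
    {F : Type} [Field F] [Finite F]
    {K : Fin ℓ → Type} [∀ i, Field (K i)] [∀ i, Finite (K i)]
    [∀ i, Algebra (K i) F] [∀ i, FiniteDimensional (K i) F]
    (C : Submodule F (SRAmb ℓ nv F)) (k : ℕ) (hk : Module.finrank F C = k)
    (hmsrd : SRminDist K C = (∑ i, nv i) - k + 1)
    (L : SRLat ℓ nv K) :
    (SRrk L ≤ (∑ i, nv i) - k → SRrho C L = SRrk L) ∧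
    ((∑ i, nv i) - k < SRrk L → SRrho C L = (∑ i, nv i) - k) := by
  classical
  have hamb : finrank F (SRAmb ℓ nv F) = ∑ i, nv i := finrank_SRAmb
  have hkn : k ≤ ∑ i, nv i := by
    rw [← hk, ← hamb]; exact Submodule.finrank_le C
  have hdualC := finrank_SRdual C
  rw [hk] at hdualC
  have hrho := SRrho_eq C L
  have hker : SRdual C ⊓ SRVL (F := F) (SRlatPerp L) = SRdual (C ⊔ SRVL (F := F) (K := K) L) := by
    rw [SRdual_sup, SRdual_SRVL]
  rw [hker] at hrho
  have hsup := finrank_SRdual (C ⊔ SRVL (F := F) (K := K) L)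
  have hsupinf := Submodule.finrank_sup_add_finrank_inf_eq C (SRVL (F := F) (K := K) L)
  rw [hk, finrank_SRVL L] at hsupinf
  have hgle : finrank F ↥(C ⊔ SRVL (F := F) (K := K) L) ≤ ∑ i, nv i := by
    rw [← hamb]; exact Submodule.finrank_le _
  constructor
  · intro hle
    have he : finrank F ↥(C ⊓ SRVL (F := F) (K := K) L) = 0 := by
      rw [inf_SRVL_eq_bot hmsrd hle, finrank_bot]
    omega
  · intro hlt
    obtain ⟨L', hL'le, hL'rk⟩ := exists_sublat L ((∑ i, nv i) - k) (le_of_lt hlt)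
    have hVle : SRVL (F := F) (K := K) L' ≤ SRVL (F := F) (K := K) L := fun c hc i => le_trans (hc i) (hL'le i)
    have hbot : (C ⊓ SRVL (F := F) (K := K) L) ⊓ SRVL (F := F) (K := K) L' = ⊥ := by
      rw [eq_bot_iff]
      intro c hc
      have hmem : c ∈ C ⊓ SRVL (F := F) (K := K) L' :=
        Submodule.mem_inf.mpr ⟨(Submodule.mem_inf.mp (Submodule.mem_inf.mp hc).1).1,
          (Submodule.mem_inf.mp hc).2⟩
      rw [inf_SRVL_eq_bot hmsrd (le_of_eq hL'rk)] at hmem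
      exact hmem
    have hdim : finrank F ↥((C ⊓ SRVL (F := F) (K := K) L) ⊔ SRVL (F := F) (K := K) L')
        ≤ finrank F ↥(SRVL (F := F) (K := K) L) :=
      Submodule.finrank_mono (sup_le inf_le_right hVle)
    have hsum2 := Submodule.finrank_sup_add_finrank_inf_eq
      (C ⊓ SRVL (F := F) (K := K) L) (SRVL (F := F) (K := K) L')
    rw [hbot, finrank_bot, finrank_SRVL L'] at hsum2
    rw [finrank_SRVL L] at hdim
    rw [hL'rk] at hsum2
    omega
end

section
/- (Generalized Singleton bound for sum-rank metric codes.) Let C be an [n,k;n_1,…,n_ℓ] sum-rank metric code over (F;K_1,…,K_ℓ) with k > 0. Then for every i = 1,…,k, the i-th generalized sum-rank weight satisfies d_{SR,i}(C) ≤ n − k + i. -/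
open Module

variable {ℓ : ℕ} {nv : Fin ℓ → ℕ} {F : Type} [Field F]
  {K : Fin ℓ → Type} [∀ i, Field (K i)] [∀ i, Algebra (K i) F]

def zeroOff (k : Type) [Field k] {m : Type} [Fintype m] (s : Finset m) :
    Submodule k (m → k) where
  carrier := {v | ∀ t, t ∉ s → v t = 0}
  zero_mem' := by intro t _; rfl
  add_mem' := by intro a b ha hb t ht; simp [ha t ht, hb t ht]
  smul_mem' := by intro c a ha t ht; simp [ha t ht]

lemma mem_zeroOff {k : Type} [Field k] {m : Type} [Fintype m] {s : Finset m}
    {v : m → k} : v ∈ zeroOff k s ↔ ∀ t, t ∉ s → v t = 0 := Iff.rfl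

noncomputable def zeroOffEquiv (k : Type) [Field k] {m : Type} [Fintype m]
    [DecidableEq m] (s : Finset m) : zeroOff k s ≃ₗ[k] (s → k) where
  toFun v := fun t => v.1 t.1
  map_add' a b := rfl
  map_smul' c a := rfl
  invFun f := ⟨fun t => if h : t ∈ s then f ⟨t, h⟩ else 0, by
    intro t ht; simp [ht]⟩
  left_inv := by
    rintro ⟨v, hv⟩
    ext t
    by_cases h : t ∈ s <;> simp [h, hv t]
  right_inv := by
    intro f; ext t; simp

lemma finrank_zeroOff (k : Type) [Field k] {m : Type} [Fintype m]
    (s : Finset m) : finrank k (zeroOff k s) = s.card := by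
  classical
  rw [(zeroOffEquiv k s).finrank_eq, Module.finrank_fintype_fun_eq_card,
    Fintype.card_coe]

section W
variable {ℓ : ℕ} {nv : Fin ℓ → ℕ} (F : Type) [Field F]

/-- Vectors in the ambient space vanishing off `T`. -/
def sigW (T : Finset ((i : Fin ℓ) × Fin (nv i))) :
    Submodule F ((i : Fin ℓ) → Fin (nv i) → F) where
  carrier := {c | ∀ i t, (⟨i, t⟩ : (i : Fin ℓ) × Fin (nv i)) ∉ T → c i t = 0}
  zero_mem' := by intro i t _; rfl
  add_mem' := by intro a b ha hb i t ht; simp [ha i t ht, hb i t ht]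
  smul_mem' := by intro c a ha i t ht; simp [ha i t ht]

noncomputable def sigWEquiv (T : Finset ((i : Fin ℓ) × Fin (nv i))) :
    sigW F T ≃ₗ[F] (T → F) where
  toFun c := fun x => c.1 x.1.1 x.1.2
  map_add' a b := rfl
  map_smul' c a := rfl
  invFun f := ⟨fun i t => if h : (⟨i, t⟩ : (i : Fin ℓ) × Fin (nv i)) ∈ T
      then f ⟨⟨i, t⟩, h⟩ else 0, by intro i t ht; simp [ht]⟩
  left_inv := by
    rintro ⟨c, hc⟩
    ext i t
    by_cases h : (⟨i, t⟩ : (i : Fin ℓ) × Fin (nv i)) ∈ T <;> simp [h, hc i t]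
  right_inv := by intro f; ext ⟨⟨i, t⟩, h⟩; simp [h]

lemma finrank_sigW (T : Finset ((i : Fin ℓ) × Fin (nv i))) :
    finrank F (sigW F T) = T.card := by
  rw [(sigWEquiv F T).finrank_eq, Module.finrank_fintype_fun_eq_card,
    Fintype.card_coe]
end W

/-- Generalized Singleton bound for sum-rank metric codes:
For an `[n,k]` sum-rank metric code `C` with `k > 0` and `1 ≤ i ≤ k`,
`d_{SR,i}(C) ≤ n − k + i`. -/
theorem stmt19_singleton_bound
    {ℓ : ℕ} (hℓ : 0 < ℓ) {nv : Fin ℓ → ℕ} (hnv : ∀ i, 0 < nv i)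
    {F : Type} [Field F] [Finite F]
    {K : Fin ℓ → Type} [∀ i, Field (K i)] [∀ i, Finite (K i)]
    [∀ i, Algebra (K i) F] [∀ i, FiniteDimensional (K i) F]
    (C : Submodule F (SRAmb ℓ nv F)) (k : ℕ) (hk : Module.finrank F C = k)
    (hk0 : 0 < k) (r : ℕ) (hr1 : 1 ≤ r) (hr2 : r ≤ k) :
    SRdgw K C r ≤ (∑ i, nv i) - k + r := by
  classical
  set n := ∑ i, nv i with hn
  have hamb : finrank F (SRAmb ℓ nv F) = n := by
    rw [Module.finrank_pi_fintype]
    simp [Module.finrank_fintype_fun_eq_card]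
    exact hn.symm
  have hkn : k ≤ n := by
    have := Submodule.finrank_le C
    rw [hk, hamb] at this
    exact this
  have hcard : n - k + r ≤ (Finset.univ : Finset ((i : Fin ℓ) × Fin (nv i))).card := by
    rw [Finset.card_univ, Fintype.card_sigma]
    simp only [Fintype.card_fin]
    omega
  obtain ⟨T, -, hT⟩ := Finset.exists_subset_card_eq hcard
  set S : ∀ i, Finset (Fin (nv i)) :=
    fun i => Finset.univ.filter (fun t => (⟨i, t⟩ : (i : Fin ℓ) × Fin (nv i)) ∈ T) with hS
  set L : SRLat ℓ nv K := fun i => zeroOff (K i) (S i) with hL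
  have hrk : SRrk L = T.card := by
    rw [SRrk]
    rw [Finset.sum_congr rfl fun i _ => finrank_zeroOff (K i) (S i)]
    rw [Finset.card_eq_sum_card_fiberwise (f := Sigma.fst)
      (t := (Finset.univ : Finset (Fin ℓ))) (fun x _ => Finset.mem_univ _)]
    refine Finset.sum_congr rfl fun i _ => ?_
    refine Finset.card_bij (fun t _ => (⟨i, t⟩ : (i : Fin ℓ) × Fin (nv i))) ?_ ?_ ?_
    · intro t ht
      simp only [hS, Finset.mem_filter, Finset.mem_univ, true_and] at ht
      simp [ht]
    · intro a ha b hb hab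
      simpa using hab
    · rintro ⟨j, t⟩ hx
      simp only [Finset.mem_filter] at hx
      obtain ⟨hxT, hxi⟩ := hx
      subst hxi
      exact ⟨t, by simp [hS, hxT], rfl⟩
  have hWle : sigW F T ≤ SRVL L := by
    intro c hc i
    apply Submodule.span_le.mpr
    rintro v ⟨f, rfl⟩
    intro t ht
    have htT : (⟨i, t⟩ : (i : Fin ℓ) × Fin (nv i)) ∉ T := by
      simp only [hS, Finset.mem_filter, Finset.mem_univ, true_and] at ht
      exact ht
    show f (c i t) = 0
    rw [hc i t htT, map_zero]
  have h1 : finrank F ↥(C ⊔ sigW F T) + finrank F ↥(C ⊓ sigW F T)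
      = k + T.card := by
    rw [Submodule.finrank_sup_add_finrank_inf_eq, hk, finrank_sigW]
  have h2 : finrank F ↥(C ⊔ sigW F T) ≤ n := by
    rw [← hamb]; exact Submodule.finrank_le _
  have h3 : r ≤ finrank F ↥(C ⊓ sigW F T) := by omega
  have h4 : C ⊓ sigW F T ≤ C ⊓ SRVL L :=
    le_inf inf_le_left (le_trans inf_le_right hWle)
  have h5 : r ≤ finrank F ↥(C ⊓ SRVL L) :=
    le_trans h3 (Submodule.finrank_mono h4)
  exact Nat.sInf_le ⟨L, h5, by rw [hrk, hT]⟩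
end
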